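/- Let D ∈ ℝ^{n×n} and S ∈ ℝ^{(n-p)×n} with rank S = n-p and ker S ⊆ ker D, and let D̂ = S D S⁺ be the pseudo-similar matrix. If λ ∈ ℂ is a nonzero eigenvalue of D, then λ is an eigenvalue of D̂ with the same algebraic and geometric multiplicity, and S restricts to a bijection from the generalized λ-eigenspace of D onto that of D̂. -/

import Mathlib

open Matrix

section Aux

open Polynomial

lemma my_eval_charpoly {m : ℕ} (M : Matrix (Fin m) (Fin m) ℂ) (x : ℂ) :
    M.charpoly.eval x = (x • (1 : Matrix (Fin m) (Fin m) ℂ) - M).det := by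
  rw [Matrix.charpoly, eval_det, Matrix.matPolyEquiv_charmatrix]
  simp [smul_one_eq_diagonal]

lemma charpoly_mul_comm_rect {k m : ℕ} (hk : k ≤ m)
    (A : Matrix (Fin k) (Fin m) ℂ) (B : Matrix (Fin m) (Fin k) ℂ) :
    (B * A).charpoly = X ^ (m - k) * (A * B).charpoly := by
  apply Polynomial.eq_of_infinite_eval_eq
  apply Set.Infinite.mono (s := {(0:ℂ)}ᶜ)
  · intro x hx
    have hx0 : x ≠ 0 := hx
    have key : ∀ {a b : ℕ} (P : Matrix (Fin a) (Fin b) ℂ) (Q : Matrix (Fin b) (Fin a) ℂ),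
        x • (1 : Matrix (Fin a) (Fin a) ℂ) - P * Q = x • (1 - P * (x⁻¹ • Q)) := by
      intro a b P Q
      rw [Matrix.mul_smul, smul_sub, smul_smul, mul_inv_cancel₀ hx0, one_smul]
    simp only [Set.mem_setOf_eq]
    rw [my_eval_charpoly, eval_mul, eval_pow, eval_X, my_eval_charpoly,
      key B A, key A B, Matrix.det_smul, Matrix.det_smul,
      Matrix.det_one_sub_mul_comm]
    rw [Fintype.card_fin, Fintype.card_fin]
    rw [Matrix.smul_mul, ← Matrix.mul_smul]
    rw [← mul_assoc, ← pow_add, Nat.sub_add_cancel hk]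
  · exact (Set.finite_singleton 0).infinite_compl

lemma rank_isUnit {k : ℕ} (A : Matrix (Fin k) (Fin k) ℝ) (h : A.rank = k) : IsUnit A := by
  rw [← Matrix.mulVec_surjective_iff_isUnit]
  have ht : LinearMap.range A.mulVecLin = ⊤ := by
    apply Submodule.eq_top_of_finrank_eq
    rw [Module.finrank_fin_fun]
    exact h
  intro w
  obtain ⟨v, hv⟩ := LinearMap.range_eq_top.mp ht w
  exact ⟨v, hv⟩

lemma intertwine_pow {M N : Type*} [AddCommGroup M] [Module ℂ M] [AddCommGroup N] [Module ℂ N]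
    (f : Module.End ℂ M) (g : Module.End ℂ N) (s : M →ₗ[ℂ] N)
    (h : s ∘ₗ (f : M →ₗ[ℂ] M) = (g : N →ₗ[ℂ] N) ∘ₗ s) (m : ℕ) :
    s ∘ₗ ((f ^ m : Module.End ℂ M) : M →ₗ[ℂ] M)
      = ((g ^ m : Module.End ℂ N) : N →ₗ[ℂ] N) ∘ₗ s := by
  induction m with
  | zero => rfl
  | succ m ih =>
      rw [pow_succ, pow_succ, Module.End.mul_eq_comp, Module.End.mul_eq_comp,
        ← LinearMap.comp_assoc, ih, LinearMap.comp_assoc, h, LinearMap.comp_assoc]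

lemma map_c_mul {a b c : ℕ} (M : Matrix (Fin a) (Fin b) ℝ) (N : Matrix (Fin b) (Fin c) ℝ) :
    (M * N).map Complex.ofReal = M.map Complex.ofReal * N.map Complex.ofReal := by
  ext i j
  simp [Matrix.mul_apply]

lemma map_c_one {a : ℕ} : ((1 : Matrix (Fin a) (Fin a) ℝ)).map Complex.ofReal = 1 := by
  ext i j
  simp [Matrix.one_apply, apply_ite]

end Aux

/-- The Moore–Penrose pseudo-inverse of a full-row-rank matrix: `S⁺ = Sᵀ(SSᵀ)⁻¹`. -/
noncomputable def moorePenrose {k n : ℕ} (S : Matrix (Fin k) (Fin n) ℝ) :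
    Matrix (Fin n) (Fin k) ℝ :=
  Sᵀ * (S * Sᵀ)⁻¹

/-- Let `D̂ = S D S⁺` be pseudo-similar to `D` via a full-row-rank `S` with
`ker S ⊆ ker D`.  Every nonzero eigenvalue `λ ∈ ℂ` of `D` is an eigenvalue of `D̂`
with the same algebraic multiplicity (as a root of the characteristic polynomial)
and the same geometric multiplicity, and `S` restricts to a bijection from the
generalized `λ`-eigenspace of `D` onto that of `D̂`. -/
theorem pseudo_similar_nonzero_spectrum {n p : ℕ}
    (D : Matrix (Fin n) (Fin n) ℝ) (S : Matrix (Fin (n - p)) (Fin n) ℝ)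
    (hrank : S.rank = n - p)
    (hker : ∀ v : Fin n → ℝ, S.mulVec v = 0 → D.mulVec v = 0)
    (lam : ℂ) (hlam : lam ≠ 0)
    (heig : (D.map (Complex.ofReal)).charpoly.IsRoot lam) :
    letI Dc := D.map (Complex.ofReal)
    letI Sc := S.map (Complex.ofReal)
    letI Dhatc := (S * D * moorePenrose S).map (Complex.ofReal)
    (Dhatc.charpoly.IsRoot lam ∧
      Dc.charpoly.rootMultiplicity lam = Dhatc.charpoly.rootMultiplicity lam) ∧
    (Module.finrank ℂ (Module.End.eigenspace Dc.mulVecLin lam) =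
      Module.finrank ℂ (Module.End.eigenspace Dhatc.mulVecLin lam)) ∧
    Set.BijOn (fun v => Sc.mulVec v)
      ((Module.End.maxGenEigenspace Dc.mulVecLin lam : Submodule ℂ (Fin n → ℂ)) : Set (Fin n → ℂ))
      ((Module.End.maxGenEigenspace Dhatc.mulVecLin lam :
        Submodule ℂ (Fin (n - p) → ℂ)) : Set (Fin (n - p) → ℂ)) := by
  set Dc := D.map Complex.ofReal with hDcDef
  set Sc := S.map Complex.ofReal with hScDef
  set Dhatc := (S * D * moorePenrose S).map Complex.ofReal with hDhatDef
  -- `S S⁺ = 1` over ℝ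
  have hSS : S * moorePenrose S = 1 := by
    have h1 : (S * Sᵀ).rank = n - p := by rw [Matrix.rank_self_mul_transpose, hrank]
    have h2 : IsUnit (S * Sᵀ) := rank_isUnit _ h1
    rw [moorePenrose, ← Matrix.mul_assoc]
    exact Matrix.mul_nonsing_inv _ ((Matrix.isUnit_iff_isUnit_det _).mp h2)
  -- `D S⁺ S = D` over ℝ
  have hDQ : D * moorePenrose S * S = D := by
    have hz : D * (1 - moorePenrose S * S) = 0 := by
      have hv : ∀ v, D.mulVec ((1 - moorePenrose S * S).mulVec v) = 0 := by
        intro v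
        apply hker
        rw [Matrix.mulVec_mulVec, Matrix.mul_sub, Matrix.mul_one, ← Matrix.mul_assoc, hSS,
          Matrix.one_mul, sub_self, Matrix.zero_mulVec]
      have : Matrix.toLin' (D * (1 - moorePenrose S * S))
          = Matrix.toLin' (0 : Matrix (Fin n) (Fin n) ℝ) := by
        apply LinearMap.ext
        intro v
        simp only [Matrix.toLin'_apply, ← Matrix.mulVec_mulVec, hv v, Matrix.zero_mulVec]
      exact Matrix.toLin'.injective this
    rw [Matrix.mul_sub, Matrix.mul_one, sub_eq_zero, ← Matrix.mul_assoc] at hz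
    exact hz.symm
  -- complexified matrices
  set Bc : Matrix (Fin n) (Fin (n - p)) ℂ := (D * moorePenrose S).map Complex.ofReal with hBc
  have hBS : Bc * Sc = Dc := by
    rw [hBc, hScDef, hDcDef, ← map_c_mul, Matrix.mul_assoc, ← Matrix.mul_assoc, hDQ]
  have hSB : Sc * Bc = Dhatc := by
    rw [hDhatDef, hBc, hScDef, ← map_c_mul, ← Matrix.mul_assoc]
  -- charpoly factorization
  have hfact : Dc.charpoly = Polynomial.X ^ (n - (n - p)) * Dhatc.charpoly := by
    rw [← hBS, ← hSB]
    exact charpoly_mul_comm_rect (Nat.sub_le n p) Sc Bc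
  have hDhatne : Dhatc.charpoly ≠ 0 := (Matrix.charpoly_monic _).ne_zero
  have hXne : (Polynomial.X : Polynomial ℂ) ^ (n - (n - p)) ≠ 0 :=
    pow_ne_zero _ Polynomial.X_ne_zero
  have hXroot : ¬ (Polynomial.X ^ (n - (n - p)) : Polynomial ℂ).IsRoot lam := by
    simp only [Polynomial.IsRoot, Polynomial.eval_pow, Polynomial.eval_X]
    exact pow_ne_zero _ hlam
  have hroot : Dhatc.charpoly.IsRoot lam := by
    have := heig
    rw [hfact] at this
    simp only [Polynomial.IsRoot, Polynomial.eval_mul, Polynomial.eval_pow,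
      Polynomial.eval_X, mul_eq_zero] at this ⊢
    rcases this with h | h
    · exact absurd h (pow_ne_zero _ hlam)
    · exact h
  have hmult : Dc.charpoly.rootMultiplicity lam = Dhatc.charpoly.rootMultiplicity lam := by
    rw [hfact, Polynomial.rootMultiplicity_mul (mul_ne_zero hXne hDhatne),
      Polynomial.rootMultiplicity_eq_zero hXroot, zero_add]
  -- intertwining relations
  have hHS : Dhatc * Sc = Sc * Dc := by
    rw [← hSB, ← hBS, Matrix.mul_assoc, ← Matrix.mul_assoc]
  have hDB : Dc * Bc = Bc * Dhatc := by
    rw [← hSB, ← hBS, Matrix.mul_assoc, ← Matrix.mul_assoc]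
  -- geometric multiplicity: explicit linear equivalence of eigenspaces
  have hfw : ∀ v : Fin n → ℂ, v ∈ Module.End.eigenspace Dc.mulVecLin lam →
      Sc.mulVec v ∈ Module.End.eigenspace Dhatc.mulVecLin lam := by
    intro v hv
    rw [Module.End.mem_eigenspace_iff] at hv ⊢
    rw [Matrix.mulVecLin_apply] at hv ⊢
    rw [Matrix.mulVec_mulVec, hHS, ← Matrix.mulVec_mulVec, hv, Matrix.mulVec_smul]
  have hbw : ∀ w : Fin (n - p) → ℂ, w ∈ Module.End.eigenspace Dhatc.mulVecLin lam →
      lam⁻¹ • Bc.mulVec w ∈ Module.End.eigenspace Dc.mulVecLin lam := by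
    intro w hw
    rw [Module.End.mem_eigenspace_iff] at hw ⊢
    rw [Matrix.mulVecLin_apply] at hw ⊢
    rw [Matrix.mulVec_smul, Matrix.mulVec_mulVec, hDB, ← Matrix.mulVec_mulVec, hw,
      Matrix.mulVec_smul]
    rw [smul_comm]
  have e : (Module.End.eigenspace Dc.mulVecLin lam) ≃ₗ[ℂ]
      (Module.End.eigenspace Dhatc.mulVecLin lam) :=
    { toFun := fun v => ⟨Sc.mulVec v.1, hfw v.1 v.2⟩
      map_add' := fun v w => by
        ext
        simp [Matrix.mulVec_add]
      map_smul' := fun c v => by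
        ext
        simp [Matrix.mulVec_smul]
      invFun := fun w => ⟨lam⁻¹ • Bc.mulVec w.1, hbw w.1 w.2⟩
      left_inv := fun v => by
        have hv := v.2
        rw [Module.End.mem_eigenspace_iff, Matrix.mulVecLin_apply] at hv
        ext
        simp only [Matrix.mulVec_mulVec, hBS]
        rw [hv, smul_smul, inv_mul_cancel₀ hlam, one_smul]
      right_inv := fun w => by
        have hw := w.2
        rw [Module.End.mem_eigenspace_iff, Matrix.mulVecLin_apply] at hw
        ext
        simp only [Matrix.mulVec_smul, Matrix.mulVec_mulVec, hSB]
        rw [hw, smul_smul, inv_mul_cancel₀ hlam, one_smul] }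
  -- intertwining of shifted endomorphisms
  set fD : Module.End ℂ (Fin n → ℂ) := Dc.mulVecLin with hfD
  set fH : Module.End ℂ (Fin (n - p) → ℂ) := Dhatc.mulVecLin with hfH
  set s : (Fin n → ℂ) →ₗ[ℂ] (Fin (n - p) → ℂ) := Sc.mulVecLin with hs
  set t : (Fin (n - p) → ℂ) →ₗ[ℂ] (Fin n → ℂ) := Bc.mulVecLin with ht
  have hcomm1 : s ∘ₗ ((fD - lam • 1 : Module.End ℂ (Fin n → ℂ)) : (Fin n → ℂ) →ₗ[ℂ] (Fin n → ℂ))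
      = ((fH - lam • 1 : Module.End ℂ (Fin (n - p) → ℂ)) :
          (Fin (n - p) → ℂ) →ₗ[ℂ] (Fin (n - p) → ℂ)) ∘ₗ s := by
    apply LinearMap.ext
    intro v
    simp only [LinearMap.comp_apply, LinearMap.sub_apply, LinearMap.smul_apply,
      Module.End.one_apply, hfD, hfH, hs, Matrix.mulVecLin_apply, Matrix.mulVec_sub,
      Matrix.mulVec_smul]
    rw [Matrix.mulVec_mulVec, Matrix.mulVec_mulVec, hHS]
  have hcomm2 : t ∘ₗ ((fH - lam • 1 : Module.End ℂ (Fin (n - p) → ℂ)) :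
        (Fin (n - p) → ℂ) →ₗ[ℂ] (Fin (n - p) → ℂ))
      = ((fD - lam • 1 : Module.End ℂ (Fin n → ℂ)) : (Fin n → ℂ) →ₗ[ℂ] (Fin n → ℂ)) ∘ₗ t := by
    apply LinearMap.ext
    intro v
    simp only [LinearMap.comp_apply, LinearMap.sub_apply, LinearMap.smul_apply,
      Module.End.one_apply, hfD, hfH, ht, Matrix.mulVecLin_apply, Matrix.mulVec_sub,
      Matrix.mulVec_smul]
    rw [Matrix.mulVec_mulVec, Matrix.mulVec_mulVec, hDB]
  -- kernel of Sc is contained in kernel of Dc (over ℂ)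
  have hkerC : ∀ v : Fin n → ℂ, Sc.mulVec v = 0 → Dc.mulVec v = 0 := by
    intro v hv
    rw [← hBS, ← Matrix.mulVec_mulVec, hv, Matrix.mulVec_zero]
  -- zero-eigenvector facts
  have hzero_mem : ∀ (m : ℕ) (g : Module.End ℂ (Fin m → ℂ)) (x : Fin m → ℂ), g x = 0 →
      x ∈ g.maxGenEigenspace 0 := by
    intro m g x hx
    rw [Module.End.mem_maxGenEigenspace]
    exact ⟨1, by simpa using hx⟩
  have hdisjD : Disjoint (fD.maxGenEigenspace lam) (fD.maxGenEigenspace 0) :=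
    Module.End.disjoint_genEigenspace fD hlam ⊤ ⊤
  have hdisjH : Disjoint (fH.maxGenEigenspace lam) (fH.maxGenEigenspace 0) :=
    Module.End.disjoint_genEigenspace fH hlam ⊤ ⊤
  -- maps-to for generalized eigenspaces
  have hmapsTo : Set.MapsTo (fun v => Sc.mulVec v)
      (fD.maxGenEigenspace lam : Set (Fin n → ℂ))
      (fH.maxGenEigenspace lam : Set (Fin (n - p) → ℂ)) := by
    intro v hv
    rw [SetLike.mem_coe, Module.End.mem_maxGenEigenspace] at hv ⊢
    obtain ⟨m, hm⟩ := hv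
    refine ⟨m, ?_⟩
    have := congrArg (fun (L : (Fin n → ℂ) →ₗ[ℂ] (Fin (n - p) → ℂ)) => L v)
      (intertwine_pow _ _ s hcomm1 m)
    simp only [LinearMap.comp_apply] at this
    show ((fH - lam • 1) ^ m) (s v) = 0
    rw [← this, hm, map_zero]
  refine ⟨⟨hroot, hmult⟩, e.finrank_eq, hmapsTo, ?_, ?_⟩
  · -- injectivity on the generalized eigenspace
    intro v1 h1 v2 h2 heq12
    rw [SetLike.mem_coe] at h1 h2
    have hsub : v1 - v2 ∈ fD.maxGenEigenspace lam := sub_mem h1 h2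
    have hS0 : Sc.mulVec (v1 - v2) = 0 := by
      rw [Matrix.mulVec_sub, show Sc.mulVec v1 = Sc.mulVec v2 from heq12, sub_self]
    have hD0 : fD (v1 - v2) = 0 := by
      rw [hfD, Matrix.mulVecLin_apply]
      exact hkerC _ hS0
    have hmem : v1 - v2 ∈ fD.maxGenEigenspace lam ⊓ fD.maxGenEigenspace 0 :=
      ⟨hsub, hzero_mem _ _ _ hD0⟩
    exact sub_eq_zero.mp ((Submodule.mem_bot ℂ).mp (hdisjD.le_bot hmem))
  · -- surjectivity onto the generalized eigenspace
    intro w hw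
    rw [SetLike.mem_coe] at hw
    -- fH restricted to the generalized eigenspace is bijective
    have hmaps : Set.MapsTo fH (fH.maxGenEigenspace lam : Set (Fin (n - p) → ℂ))
        (fH.maxGenEigenspace lam : Set (Fin (n - p) → ℂ)) :=
      Module.End.mapsTo_maxGenEigenspace_of_comm (Commute.refl fH) lam
    set g := fH.restrict hmaps with hg
    have hginj : Function.Injective g := by
      rw [← LinearMap.ker_eq_bot, eq_bot_iff]
      intro x hx
      rw [LinearMap.mem_ker] at hx
      have hx0 : fH (x : Fin (n - p) → ℂ) = 0 := by
        have := congrArg (Subtype.val) hx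
        exact this
      have hmem : (x : Fin (n - p) → ℂ) ∈ fH.maxGenEigenspace lam ⊓ fH.maxGenEigenspace 0 :=
        ⟨x.2, hzero_mem _ _ _ hx0⟩
      have hx0' : (x : Fin (n - p) → ℂ) = 0 := (Submodule.mem_bot ℂ).mp (hdisjH.le_bot hmem)
      simpa [Submodule.mem_bot] using Subtype.ext hx0'
    have hgsurj : Function.Surjective g := LinearMap.surjective_of_injective hginj
    obtain ⟨u, hu⟩ := hgsurj ⟨w, hw⟩
    have huw : fH (u : Fin (n - p) → ℂ) = w := by
      have := congrArg Subtype.val hu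
      exact this
    -- candidate preimage
    refine ⟨Bc.mulVec u, ?_, ?_⟩
    · rw [SetLike.mem_coe, Module.End.mem_maxGenEigenspace]
      obtain ⟨m, hm⟩ := (Module.End.mem_maxGenEigenspace _ _ _).mp u.2
      refine ⟨m, ?_⟩
      have := congrArg (fun (L : (Fin (n - p) → ℂ) →ₗ[ℂ] (Fin n → ℂ)) => L u)
        (intertwine_pow _ _ t hcomm2 m)
      simp only [LinearMap.comp_apply] at this
      have ht' : t u = Bc.mulVec u := rfl
      rw [← ht', ← this, hm, map_zero]
    · show Sc.mulVec (Bc.mulVec u) = w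
      rw [Matrix.mulVec_mulVec, hSB]
      exact huw
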